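/- Let n be even, A, B ∈ ℤ^n with A monotone non-decreasing, and split A into halves A₁ = A[0…n/2−1], A₂ = A[n/2…n−1] and similarly B into B₁, B₂. Let pm denote the prefix-maxima operation. Define, for 0 ≤ k ≤ 2n−2, C[k] = max{ (A₁ ⋆ pm(B₁))[k], (A₁ ⋆ pm(B₂))[k−n/2], (A₂ ⋆ B₁)[k−n/2], (A₂ ⋆ B₂)[k−n] }, where out-of-range terms are ignored (treated as −∞). Then C[k] = (A ⋆ B)[k] for all 0 ≤ k ≤ 2n−2. -/

import Mathlib

/-- Max-plus convolution of `A` (defined on indices `0,…,m−1`) and `B` (defined on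
indices `0,…,m'−1`), with out-of-bounds entries interpreted as `⊥ = −∞`. -/
def maxPlusConv (m m' : ℕ) (A B : ℕ → ℤ) (k : ℕ) : WithBot ℤ :=
  ((Finset.range m ×ˢ Finset.range m').filter fun q => q.1 + q.2 = k).sup
    fun q => ((A q.1 + B q.2 : ℤ) : WithBot ℤ)

/-- Prefix maxima: `prefixMax B i = max {B j : 0 ≤ j ≤ i}`. -/
def prefixMax (B : ℕ → ℤ) (i : ℕ) : ℤ :=
  (Finset.range (i + 1)).sup' (Finset.nonempty_range_iff.mpr (Nat.succ_ne_zero i)) B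

lemma le_maxPlusConv (m m' : ℕ) (A B : ℕ → ℤ) (k i j : ℕ)
    (hi : i < m) (hj : j < m') (hk : i + j = k) :
    ((A i + B j : ℤ) : WithBot ℤ) ≤ maxPlusConv m m' A B k := by
  apply Finset.le_sup (f := fun q => ((A q.1 + B q.2 : ℤ) : WithBot ℤ)) (b := (i, j))
  simp [Finset.mem_filter, Finset.mem_product, hi, hj, hk]

lemma maxPlusConv_le (m m' : ℕ) (A B : ℕ → ℤ) (k : ℕ) (x : WithBot ℤ)
    (h : ∀ i j, i < m → j < m' → i + j = k → ((A i + B j : ℤ) : WithBot ℤ) ≤ x) :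
    maxPlusConv m m' A B k ≤ x := by
  apply Finset.sup_le
  rintro ⟨i, j⟩ hij
  simp only [Finset.mem_filter, Finset.mem_product, Finset.mem_range] at hij
  exact h i j hij.1.1 hij.1.2 hij.2

lemma le_prefixMax (B : ℕ → ℤ) (j j' : ℕ) (h : j' ≤ j) : B j' ≤ prefixMax B j :=
  Finset.le_sup' B (Finset.mem_range.mpr (Nat.lt_succ_of_le h))

lemma prefixMax_attained (B : ℕ → ℤ) (j : ℕ) : ∃ j' ≤ j, prefixMax B j = B j' := by
  obtain ⟨j', hj', h⟩ := Finset.exists_mem_eq_sup' (Finset.nonempty_range_iff.mpr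
    (Nat.succ_ne_zero j)) B
  exact ⟨j', Nat.lt_succ_iff.mp (Finset.mem_range.mp hj'), h⟩

/-- For sequences of even length `n = 2m` with `A` monotone non-decreasing, splitting
`A` and `B` into halves `A₁, A₂, B₁, B₂`, the max-plus convolution `A ⋆ B` decomposes as
`C[k] = max{(A₁ ⋆ pm(B₁))[k], (A₁ ⋆ pm(B₂))[k−n/2], (A₂ ⋆ B₁)[k−n/2], (A₂ ⋆ B₂)[k−n]}`,
where out-of-range terms are ignored (treated as `−∞`). -/
theorem maxPlusConv_recursion (m : ℕ) (hm : 0 < m) (A B : ℕ → ℤ)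
    (hA : ∀ i j, i ≤ j → j < 2 * m → A i ≤ A j) :
    ∀ k ≤ 4 * m - 2,
      maxPlusConv (2 * m) (2 * m) A B k =
        (maxPlusConv m m A (prefixMax B) k)
        ⊔ (if m ≤ k then maxPlusConv m m A (prefixMax fun j => B (m + j)) (k - m) else ⊥)
        ⊔ (if m ≤ k then maxPlusConv m m (fun i => A (m + i)) B (k - m) else ⊥)
        ⊔ (if 2 * m ≤ k then
            maxPlusConv m m (fun i => A (m + i)) (fun j => B (m + j)) (k - 2 * m) else ⊥) := by
  intro k _
  apply le_antisymm
  · apply maxPlusConv_le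
    intro i j hi hj hk
    rcases lt_or_ge i m with hi' | hi'
    · rcases lt_or_ge j m with hj' | hj'
      · -- term 1
        refine le_trans ?_ (le_sup_of_le_left (le_sup_of_le_left (le_sup_of_le_left
          (le_maxPlusConv m m A (prefixMax B) k i j hi' hj' hk))))
        exact_mod_cast add_le_add_right (le_prefixMax B j j le_rfl) _
      · -- term 2: j = m + j'
        have hmk : m ≤ k := by omega
        simp only [if_pos hmk]
        have hB : B j ≤ prefixMax (fun j => B (m + j)) (j - m) := by
          have := le_prefixMax (fun j => B (m + j)) (j - m) (j - m) le_rfl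
          simpa [Nat.add_sub_cancel' hj'] using this
        refine le_trans ?_ (le_sup_of_le_left (le_sup_of_le_left (le_sup_of_le_right
          (le_maxPlusConv m m A (prefixMax fun j => B (m + j)) (k - m) i (j - m) hi'
            (by omega) (by omega)))))
        exact_mod_cast add_le_add_right hB _
    · rcases lt_or_ge j m with hj' | hj'
      · -- term 3
        have hmk : m ≤ k := by omega
        simp only [if_pos hmk]
        have h1 : i = m + (i - m) := by omega
        rw [h1]
        exact le_sup_of_le_left (le_sup_of_le_right
          (le_maxPlusConv m m (fun i => A (m + i)) B (k - m) (i - m) j (by omega) hj'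
            (by omega)))
      · -- term 4
        have hmk : 2 * m ≤ k := by omega
        simp only [if_pos hmk]
        have h1 : i = m + (i - m) := by omega
        have h2 : j = m + (j - m) := by omega
        rw [h1, h2]
        exact le_sup_of_le_right
          (le_maxPlusConv m m (fun i => A (m + i)) (fun j => B (m + j)) (k - 2 * m)
            (i - m) (j - m) (by omega) (by omega) (by omega))
  · refine sup_le (sup_le (sup_le ?_ ?_) ?_) ?_
    · apply maxPlusConv_le
      intro i j hi hj hk
      obtain ⟨j', hj'le, hj'eq⟩ := prefixMax_attained B j
      rw [hj'eq]
      refine le_trans ?_ (le_maxPlusConv (2 * m) (2 * m) A B k (k - j') j'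
        (by omega) (by omega) (by omega))
      have : A i ≤ A (k - j') := hA i (k - j') (by omega) (by omega)
      exact_mod_cast add_le_add_left this _
    · split_ifs with hmk
      · apply maxPlusConv_le
        intro i j hi hj hk
        obtain ⟨j', hj'le, hj'eq⟩ := prefixMax_attained (fun j => B (m + j)) j
        rw [hj'eq]
        refine le_trans ?_ (le_maxPlusConv (2 * m) (2 * m) A B k (k - (m + j')) (m + j')
          (by omega) (by omega) (by omega))
        have : A i ≤ A (k - (m + j')) := hA i (k - (m + j')) (by omega) (by omega)
        exact_mod_cast add_le_add_left this _
      · exact bot_le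
    · split_ifs with hmk
      · apply maxPlusConv_le
        intro i j hi hj hk
        exact le_maxPlusConv (2 * m) (2 * m) A B k (m + i) j (by omega) (by omega) (by omega)
      · exact bot_le
    · split_ifs with hmk
      · apply maxPlusConv_le
        intro i j hi hj hk
        exact le_maxPlusConv (2 * m) (2 * m) A B k (m + i) (m + j)
          (by omega) (by omega) (by omega)
      · exact bot_le
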